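/- Let X be an ℝ-tree, o ∈ X, and let B ⊆ X be a nonempty subset. Then there exists a point x ∈ X such that the intersection ⋂_{b ∈ B} [o,b] equals the segment [o,x]. -/

import Mathlib

/-- `γ : ℝ → X` restricted to `[0, dist x y]` is an isometric parameterization of a
geodesic segment from `x` to `y`. -/
def IsGeodesicMap {X : Type*} [MetricSpace X] (x y : X) (γ : ℝ → X) : Prop :=
  γ 0 = x ∧ γ (dist x y) = y ∧
    ∀ s ∈ Set.Icc (0:ℝ) (dist x y), ∀ t ∈ Set.Icc (0:ℝ) (dist x y),
      dist (γ s) (γ t) = |s - t|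

/-- Along a geodesic from `x`, the point `γ t` is at distance `t` from `x`. -/
lemma IsGeodesicMap.dist_eq {X : Type*} [MetricSpace X] {x y : X} {γ : ℝ → X}
    (h : IsGeodesicMap x y γ) {t : ℝ} (ht : t ∈ Set.Icc (0:ℝ) (dist x y)) :
    dist x (γ t) = t := by
  obtain ⟨h0, _, hiso⟩ := h
  rw [← h0, hiso 0 ⟨le_refl _, dist_nonneg⟩ t ht, zero_sub, abs_neg, abs_of_nonneg ht.1]

/-- A geodesic map from `x` to `y` is also a geodesic map from `x` to any
intermediate point `γ t`. -/
lemma IsGeodesicMap.restrict {X : Type*} [MetricSpace X] {x y : X} {γ : ℝ → X}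
    (h : IsGeodesicMap x y γ) {t : ℝ} (ht : t ∈ Set.Icc (0:ℝ) (dist x y)) :
    IsGeodesicMap x (γ t) γ := by
  have hdt := h.dist_eq ht
  refine ⟨h.1, by rw [hdt], ?_⟩
  intro s hs u hu
  exact h.2.2 s ⟨hs.1, le_trans hs.2 (by rw [hdt]; exact ht.2)⟩
    u ⟨hu.1, le_trans hu.2 (by rw [hdt]; exact ht.2)⟩

/-- In an ℝ-tree `X` with marked point `o`, for every nonempty `B ⊆ X` the
intersection `⋂ b ∈ B, [o,b]` is a segment `[o,x]` for some `x ∈ X`. -/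
theorem stmt1 {X : Type*} [MetricSpace X] (seg : X → X → Set X)
    (hgeo : ∀ x y : X, ∃ γ : ℝ → X, IsGeodesicMap x y γ)
    (hseg : ∀ (x y : X) (γ : ℝ → X), IsGeodesicMap x y γ →
      seg x y = γ '' Set.Icc (0:ℝ) (dist x y))
    (htree : ∀ x y z : X, seg x y ⊆ seg x z ∪ seg z y)
    (o : X) (B : Set X) (hB : B.Nonempty) :
    ∃ x : X, ⋂ b ∈ B, seg o b = seg o x := by
  classical
  choose Γ hΓ using hgeo
  obtain ⟨b₀, hb₀⟩ := hB
  set γ : ℝ → X := Γ o b₀ with hγdef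
  have hγ : IsGeodesicMap o b₀ γ := hΓ o b₀
  set d : ℝ := dist o b₀ with hd
  have hd0 : (0:ℝ) ≤ d := dist_nonneg
  have hseg_eq : ∀ b : X, seg o b = Γ o b '' Set.Icc (0:ℝ) (dist o b) :=
    fun b => hseg o b (Γ o b) (hΓ o b)
  -- `o` belongs to every segment `seg o b`
  have ho_mem : ∀ b : X, o ∈ seg o b := by
    intro b
    rw [hseg_eq b]
    exact ⟨0, ⟨le_refl _, dist_nonneg⟩, (hΓ o b).1⟩
  -- membership of γ t (t ∈ [0,d]) in seg o b gives seg o (γ t) ⊆ seg o b,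
  -- and seg o (γ t) = γ '' [0,t]
  have hkey : ∀ b : X, ∀ t ∈ Set.Icc (0:ℝ) d, γ t ∈ seg o b →
      seg o (γ t) ⊆ seg o b := by
    intro b t ht hmem
    rw [hseg_eq b] at hmem
    obtain ⟨u, hu, huγ⟩ := hmem
    have hut : u = t := by
      have h1 : dist o (γ t) = t := hγ.dist_eq ht
      have h2 : dist o (Γ o b u) = u := (hΓ o b).dist_eq hu
      rw [huγ] at h2; rw [h1] at h2; exact h2.symm
    subst hut
    have hres : IsGeodesicMap o (γ u) (Γ o b) := by
      rw [← huγ]; exact (hΓ o b).restrict hu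
    rw [hseg o (γ u) (Γ o b) hres]
    rw [hseg_eq b]
    refine Set.image_mono ?_
    have : dist o (γ u) = u := hγ.dist_eq ht
    rw [this]
    exact Set.Icc_subset_Icc_right hu.2
  have hinit : ∀ t ∈ Set.Icc (0:ℝ) d, seg o (γ t) = γ '' Set.Icc (0:ℝ) t := by
    intro t ht
    rw [hseg o (γ t) γ (hγ.restrict ht), hγ.dist_eq ht]
  -- the segments seg o b are closed (isometric image of a compact interval)
  have hlip : LipschitzOnWith 1 γ (Set.Icc (0:ℝ) d) := by
    refine LipschitzOnWith.of_dist_le_mul fun s hs u hu => ?_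
    rw [hγ.2.2 s hs u hu]
    simp [Real.dist_eq]
  have hclosed : ∀ b : X, IsClosed (seg o b) := by
    intro b
    rw [hseg_eq b]
    have hlipb : LipschitzOnWith 1 (Γ o b) (Set.Icc (0:ℝ) (dist o b)) := by
      refine LipschitzOnWith.of_dist_le_mul fun s hs u hu => ?_
      rw [(hΓ o b).2.2 s hs u hu]
      simp [Real.dist_eq]
    exact (isCompact_Icc.image_of_continuousOn hlipb.continuousOn).isClosed
  -- the parameter set
  set T : Set ℝ := Set.Icc (0:ℝ) d ∩ (⋂ b ∈ B, γ ⁻¹' seg o b) with hT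
  have hT0 : (0:ℝ) ∈ T := by
    refine ⟨⟨le_refl _, hd0⟩, ?_⟩
    simp only [Set.mem_iInter, Set.mem_preimage]
    intro b _
    rw [hγ.1]
    exact ho_mem b
  have hTne : T.Nonempty := ⟨0, hT0⟩
  have hTbdd : BddAbove T := ⟨d, fun t ht => ht.1.2⟩
  have hTclosed : IsClosed T := by
    have : T = ⋂ b ∈ B, (Set.Icc (0:ℝ) d ∩ γ ⁻¹' seg o b) := by
      rw [hT]
      ext t
      simp only [Set.mem_inter_iff, Set.mem_iInter]
      constructor
      · rintro ⟨h1, h2⟩ b hb; exact ⟨h1, h2 b hb⟩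
      · intro h; exact ⟨(h b₀ hb₀).1, fun b hb => (h b hb).2⟩
    rw [this]
    refine isClosed_biInter fun b _ => ?_
    exact hlip.continuousOn.preimage_isClosed_of_isClosed isClosed_Icc (hclosed b)
  set s : ℝ := sSup T with hs
  have hsT : s ∈ T := hTclosed.csSup_mem hTne hTbdd
  have hsIcc : s ∈ Set.Icc (0:ℝ) d := hsT.1
  refine ⟨γ s, ?_⟩
  rw [hinit s hsIcc]
  apply Set.Subset.antisymm
  · -- ⋂ ⊆ γ '' [0, s]
    intro p hp
    simp only [Set.mem_iInter] at hp
    have hp0 : p ∈ seg o b₀ := hp b₀ hb₀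
    rw [hseg o b₀ γ hγ] at hp0
    obtain ⟨t, ht, htp⟩ := hp0
    have htT : t ∈ T := by
      refine ⟨ht, ?_⟩
      simp only [Set.mem_iInter, Set.mem_preimage]
      intro b hb
      rw [htp]; exact hp b hb
    have hts : t ≤ s := le_csSup hTbdd htT
    exact ⟨t, ⟨ht.1, hts⟩, htp⟩
  · -- γ '' [0, s] ⊆ ⋂
    rintro p ⟨t, ht, htp⟩
    simp only [Set.mem_iInter]
    intro b hb
    have hγs : γ s ∈ seg o b := by
      have := hsT.2
      simp only [Set.mem_iInter, Set.mem_preimage] at this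
      exact this b hb
    have hsub := hkey b s hsIcc hγs
    rw [hinit s hsIcc] at hsub
    exact hsub ⟨t, ht, htp⟩
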